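/- arXiv:2011.07022 — 5 statements merged into one kernel-verified Lean document; each statement's English description precedes it below -/
import Mathlib

section
/- Let f : {0,1}^n → X be a function satisfying Simon's promise for a nonzero secret s ∈ {0,1}^n, i.e., for all x ≠ y, f(x) = f(y) if and only if x = y ⊕ s. Then any vector j ∈ {0,1}^n measured by Simon's routine (i.e., any j such that (-1)^{x·j} + (-1)^{(x⊕s)·j} ≠ 0 for some x) satisfies j · s = 0 (mod 2). -/
/-- Simon's routine can only produce vectors orthogonal to the secret:
if `f` satisfies Simon's promise for a nonzero `s` and
`(-1)^(x·j) + (-1)^((x+s)·j) ≠ 0` for some `x`, then `j · s = 0`. -/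
theorem simon_measured_vectors_orthogonal {n : ℕ} {X : Type*}
    (f : (Fin n → ZMod 2) → X) (s : Fin n → ZMod 2) (hs : s ≠ 0)
    (hf : ∀ x y, x ≠ y → (f x = f y ↔ x = y + s))
    (j : Fin n → ZMod 2)
    (hj : ∃ x : Fin n → ZMod 2,
      ((-1 : ℤ) ^ (∑ i, x i * j i).val + (-1 : ℤ) ^ (∑ i, (x i + s i) * j i).val) ≠ 0) :
    ∑ i, j i * s i = 0 := by
  obtain ⟨x, hx⟩ := hj
  have hsum : (∑ i, (x i + s i) * j i) = (∑ i, x i * j i) + ∑ i, j i * s i := by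
    rw [← Finset.sum_add_distrib]
    congr 1; funext i; ring
  by_contra h
  have cases2 : ∀ a : ZMod 2, a = 0 ∨ a = 1 := by decide
  have h1 : (∑ i, j i * s i) = 1 := (cases2 _).resolve_left h
  rw [h1] at hsum
  apply hx
  rw [hsum]
  rcases cases2 (∑ i, x i * j i) with h2 | h2 <;> rw [h2] <;> decide
end

section
/- In the truncated Even-Mansour attack: write K1 = (K1¹, K1²) with K1¹ ∈ (ZMod 2)^u and K1² ∈ (ZMod 2)^{n−u}. For y ∈ (ZMod 2)^{n−u}, define g_y(x) := E_{K1,K2}(x ∥ 0^{n−u}) ⊕ P(x ∥ y) for x ∈ (ZMod 2)^u. Then g_{K1²} has period K1¹, i.e., g_{K1²}(x ⊕ K1¹) = g_{K1²}(x) for all x ∈ (ZMod 2)^u. -/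
/-- Truncated Even-Mansour: with inputs split as pairs in `(ZMod 2)^u × (ZMod 2)^v`,
`K1 = (K1¹, K1²)`, and `g_y(x) := E(x ∥ 0) ⊕ P(x ∥ y)`, the function `g_{K1²}`
has period `K1¹`. -/
theorem truncated_even_mansour_periodic {u v : ℕ}
    (P : (Fin u → ZMod 2) × (Fin v → ZMod 2) → (Fin u → ZMod 2) × (Fin v → ZMod 2))
    (K1 : (Fin u → ZMod 2) × (Fin v → ZMod 2))
    (K2 : (Fin u → ZMod 2) × (Fin v → ZMod 2))
    (E : (Fin u → ZMod 2) × (Fin v → ZMod 2) → (Fin u → ZMod 2) × (Fin v → ZMod 2))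
    (hE : ∀ z, E z = P (z + K1) + K2) :
    ∀ x : Fin u → ZMod 2,
      E (x + K1.1, 0) + P (x + K1.1, K1.2) = E (x, 0) + P (x, K1.2) := by
  intro x
  have h2 : x + K1.1 + K1.1 = x := by
    funext i; simp [add_assoc, CharTwo.add_self_eq_zero]
  have e1 : ((x + K1.1, (0 : Fin v → ZMod 2)) : _) + K1 = (x, K1.2) := by
    ext i <;> simp [add_assoc, CharTwo.add_self_eq_zero]
  have e2 : ((x, (0 : Fin v → ZMod 2)) : _) + K1 = (x + K1.1, K1.2) := by
    ext <;> simp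
  rw [hE, hE, e1, e2]
  abel
end

section
/- Correctness of the triangular basis algorithm: given input vectors x₁, …, x_m ∈ (ZMod 2)^n, Algorithm 1 (iterating i = 1..n outer, j = 1..m inner, with the used_j / av_i / b_i update rules) terminates with output data (av_i, b_i[(i+1)..n]) such that, defining β_i := 0^{i−1} ∥ (1 − av_i) ∥ b_i[(i+1)..n], the span of {β_1, …, β_n} equals the span of {x_1, …, x_m}. -/
/-- State of the triangular-basis algorithm (Algorithm 1). -/
structure AlgState (n m : ℕ) where
  x : Fin m → Fin n → ZMod 2
  used : Fin m → ZMod 2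
  av : Fin n → ZMod 2
  b : Fin n → Fin n → ZMod 2

/-- One iteration `(i, j)` of Algorithm 1:
`used_j += x_j[i] ∧ av_i`; `av_i += x_j[i] ∧ used_j`;
if `used_j` then `b_i[(i+1)..n] += x_j[(i+1)..n]`;
if `x_j[i]` then `x_j[(i+1)..n] += b_i[(i+1)..n]` (all mod 2). -/
def algStep {n m : ℕ} (i : Fin n) (j : Fin m) (s : AlgState n m) : AlgState n m :=
  let used' : ZMod 2 := s.used j + s.x j i * s.av i
  let av' : ZMod 2 := s.av i + s.x j i * used'
  let b' : Fin n → ZMod 2 := fun k => s.b i k + (if i < k then used' * s.x j k else 0)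
  let x' : Fin n → ZMod 2 := fun k => s.x j k + (if i < k then s.x j i * b' k else 0)
  { x := Function.update s.x j x'
    used := Function.update s.used j used'
    av := Function.update s.av i av'
    b := Function.update s.b i b' }

/-- Run a list of iterations in order. -/
def algRun {n m : ℕ} (L : List (Fin n × Fin m)) (s : AlgState n m) : AlgState n m :=
  L.foldl (fun s p => algStep p.1 p.2 s) s

/-- All iterations in the standard order: outer loop over `i`, inner loop over `j`. -/
def allIters (n m : ℕ) : List (Fin n × Fin m) :=
  (List.finRange n).flatMap fun i => (List.finRange m).map fun j => (i, j)

/-- Initial state: input vectors `x0`, `used = 0`, `av = 1`, `b = 0`. -/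
def initState {n m : ℕ} (x0 : Fin m → Fin n → ZMod 2) : AlgState n m :=
  { x := x0, used := fun _ => 0, av := fun _ => 1, b := fun _ _ => 0 }

/-- The triangular basis vectors `β_i = 0^{i-1} ∥ (1 - av_i) ∥ b_i[(i+1)..n]`. -/
def basisVec {n m : ℕ} (s : AlgState n m) : Fin n → Fin n → ZMod 2 :=
  fun i k => if k < i then 0 else if k = i then 1 - s.av i else s.b i k

/-! ### Auxiliary machinery for the correctness proof -/

/-- `x` vectors with coordinates below a cut zeroed out. -/
def px {n m : ℕ} (s : AlgState n m) (c : Fin m → ℕ) : Fin m → Fin n → ZMod 2 :=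
  fun j k => if (k : ℕ) < c j then 0 else s.x j k

/-- The cut function at position (row `i`, inner index `j`). -/
def cut (m : ℕ) (i j : ℕ) : Fin m → ℕ := fun j' => if (j' : ℕ) < j then i + 1 else i

/-- The loop invariant at the start of iteration `(i, j)`. -/
structure AlgInv {n m : ℕ} (x0 : Fin m → Fin n → ZMod 2) (i j : ℕ) (s : AlgState n m) : Prop where
  hbp : ∀ p : Fin n, i < (p : ℕ) → ∀ k, s.b p k = 0
  hbi : ∀ p : Fin n, (p : ℕ) = i → s.av p = 1 → ∀ k, s.b p k = 0
  hused : ∀ j' : Fin m, s.used j' = 1 →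
    ((∀ k : Fin n, i < (k : ℕ) → s.x j' k = 0) ∧
      (j ≤ (j' : ℕ) → ∀ k : Fin n, (k : ℕ) = i → s.x j' k = 0))
  hspan : Submodule.span (ZMod 2) (Set.range (basisVec s) ∪ Set.range (px s (cut m i j)))
      = Submodule.span (ZMod 2) (Set.range x0)

lemma zmod2_cases : ∀ a : ZMod 2, a = 0 ∨ a = 1 := by decide

lemma zmod2_add_self : ∀ a : ZMod 2, a + a = 0 := by decide

lemma fun_add_self {n : ℕ} (v : Fin n → ZMod 2) : v + v = 0 :=
  funext fun k => zmod2_add_self (v k)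

lemma span_union_subzero {V : Type*} [AddCommGroup V] [Module (ZMod 2) V]
    (A B : Set V) (hB : B ⊆ {0}) :
    Submodule.span (ZMod 2) (A ∪ B) = Submodule.span (ZMod 2) A := by
  refine le_antisymm (Submodule.span_le.2 (Set.union_subset Submodule.subset_span ?_))
    (Submodule.span_mono Set.subset_union_left)
  intro b hb
  have : b = 0 := hB hb
  subst this
  exact Submodule.zero_mem _

lemma basisVec_congr {n m : ℕ} {s t : AlgState n m} (h1 : s.av = t.av) (h2 : s.b = t.b) :
    basisVec s = basisVec t := by
  funext p k; unfold basisVec; rw [h1, h2]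

section Step

variable {n m : ℕ} (x0 : Fin m → Fin n → ZMod 2) (fi : Fin n) (fj : Fin m) (s : AlgState n m)

lemma algStep_x : (algStep fi fj s).x = Function.update s.x fj
    (fun k => s.x fj k + (if fi < k then s.x fj fi *
      (s.b fi k + (if fi < k then (s.used fj + s.x fj fi * s.av fi) * s.x fj k else 0)) else 0)) := rfl

lemma algStep_used : (algStep fi fj s).used =
    Function.update s.used fj (s.used fj + s.x fj fi * s.av fi) := rfl

lemma algStep_av : (algStep fi fj s).av = Function.update s.av fi
    (s.av fi + s.x fj fi * (s.used fj + s.x fj fi * s.av fi)) := rfl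

lemma algStep_b : (algStep fi fj s).b = Function.update s.b fi
    (fun k => s.b fi k + (if fi < k then (s.used fj + s.x fj fi * s.av fi) * s.x fj k else 0)) := rfl

/-- If `x_j[i] = 0` and the `b` increment vanishes, the step does nothing. -/
lemma algStep_eq_self (hξ : s.x fj fi = 0)
    (htail : ∀ k, fi < k → (s.used fj + s.x fj fi * s.av fi) * s.x fj k = 0) :
    algStep fi fj s = s := by
  obtain ⟨x, used, av, b⟩ := s
  dsimp only at hξ htail
  unfold algStep
  simp only [AlgState.mk.injEq]
  refine ⟨?_, ?_, ?_, ?_⟩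
  · rw [show (fun k => x fj k + (if fi < k then x fj fi * _ else 0)) = x fj from ?_,
      Function.update_eq_self]
    funext k
    simp [hξ]
  · rw [show used fj + x fj fi * av fi = used fj from by simp [hξ], Function.update_eq_self]
  · rw [show av fi + x fj fi * _ = av fi from by simp [hξ], Function.update_eq_self]
  · rw [show (fun k => b fi k + (if fi < k then _ * x fj k else 0)) = b fi from ?_,
      Function.update_eq_self]
    funext k
    by_cases hk : fi < k
    · simpa [hk] using htail k hk
    · simp [hk]

/-- Trivial step: the invariant's index advances when `x_j[i] = 0`. -/
lemma inv_succ (hξ : s.x fj fi = 0) (h : AlgInv x0 (fi : ℕ) (fj : ℕ) s) :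
    AlgInv x0 (fi : ℕ) ((fj : ℕ) + 1) s := by
  obtain ⟨hbp, hbi, hused, hspan⟩ := h
  refine ⟨hbp, hbi, ?_, ?_⟩
  · intro j' hj'
    refine ⟨(hused j' hj').1, fun hle => (hused j' hj').2 (by omega)⟩
  · rw [show px s (cut m (fi : ℕ) ((fj : ℕ) + 1)) = px s (cut m (fi : ℕ) (fj : ℕ)) from ?_]
    · exact hspan
    funext j' k
    unfold px cut
    by_cases hj' : (j' : ℕ) = (fj : ℕ)
    · split_ifs
      all_goals first
        | rfl
        | omega
        | (have hk : k = fi := Fin.ext (by omega)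
           have hj2 : j' = fj := Fin.ext hj'
           simp [hk, hj2, hξ])
    · have h12 : ((j' : ℕ) < (fj : ℕ) + 1) = ((j' : ℕ) < (fj : ℕ)) := by
        simp only [eq_iff_iff]; omega
      simp only [h12]

lemma step_inv (h : AlgInv x0 (fi : ℕ) (fj : ℕ) s) :
    AlgInv x0 (fi : ℕ) ((fj : ℕ) + 1) (algStep fi fj s) := by
  obtain ⟨hbp, hbi, hused, hspan⟩ := h
  rcases (zmod2_cases (s.used fj)).symm with hu | hu
  · -- Case 1 : `used_j = 1`, nothing happens
    have hξ : s.x fj fi = 0 := (hused fj hu).2 le_rfl fi rfl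
    have htail : ∀ k, fi < k → (s.used fj + s.x fj fi * s.av fi) * s.x fj k = 0 := by
      intro k hk
      rw [(hused fj hu).1 k hk, mul_zero]
    rw [algStep_eq_self fi fj s hξ htail]
    exact inv_succ x0 fi fj s hξ ⟨hbp, hbi, hused, hspan⟩
  rcases zmod2_cases (s.x fj fi) with hξ | hξ
  · -- Case 2 : `x_j[i] = 0`, nothing happens
    have htail : ∀ k, fi < k → (s.used fj + s.x fj fi * s.av fi) * s.x fj k = 0 := by
      intro k hk
      simp [hu, hξ]
    rw [algStep_eq_self fi fj s hξ htail]
    exact inv_succ x0 fi fj s hξ ⟨hbp, hbi, hused, hspan⟩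
  rcases zmod2_cases (s.av fi) with ha | ha
  · -- Case 3 : pivot already exists, `x_j += tail b_i`
    have hsu : (algStep fi fj s).used = s.used := by
      rw [algStep_used,
        show s.used fj + s.x fj fi * s.av fi = s.used fj from by
          rw [hξ, ha, mul_zero, add_zero],
        Function.update_eq_self]
    have hsa : (algStep fi fj s).av = s.av := by
      rw [algStep_av,
        show s.av fi + s.x fj fi * (s.used fj + s.x fj fi * s.av fi) = s.av fi from by
          rw [hu, hξ, ha]; norm_num,
        Function.update_eq_self]
    have hsb : (algStep fi fj s).b = s.b := by
      rw [algStep_b,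
        show (fun k => s.b fi k +
            (if fi < k then (s.used fj + s.x fj fi * s.av fi) * s.x fj k else 0)) = s.b fi from by
          funext k; rw [hu, hξ, ha]; simp,
        Function.update_eq_self]
    have hsx : (algStep fi fj s).x = Function.update s.x fj
        (fun k => s.x fj k + (if fi < k then s.b fi k else 0)) := by
      rw [algStep_x]
      refine congrArg _ ?_
      funext k
      rw [hu, hξ, ha]
      simp
    have hB : basisVec (algStep fi fj s) = basisVec s := basisVec_congr hsa hsb
    have hYne : ∀ j', j' ≠ fj →
        px (algStep fi fj s) (cut m (fi : ℕ) ((fj : ℕ) + 1)) j' = px s (cut m (fi : ℕ) (fj : ℕ)) j' := by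
      intro j' hjj
      funext k
      unfold px cut
      rw [hsx, Function.update_of_ne hjj]
      have hvne : (j' : ℕ) ≠ (fj : ℕ) := Fin.val_ne_of_ne hjj
      have h12 : ((j' : ℕ) < (fj : ℕ) + 1) = ((j' : ℕ) < (fj : ℕ)) := by
        simp only [eq_iff_iff]; omega
      simp only [h12]
    have hYj : px (algStep fi fj s) (cut m (fi : ℕ) ((fj : ℕ) + 1)) fj
        = px s (cut m (fi : ℕ) (fj : ℕ)) fj + basisVec s fi := by
      funext k
      unfold px cut basisVec
      rw [Pi.add_apply, hsx, Function.update_self]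
      simp only [Nat.lt_succ_self, lt_irrefl, if_true, if_false]
      rcases lt_trichotomy (k : ℕ) (fi : ℕ) with hk | hk | hk
      · rw [if_pos (show (k : ℕ) < (fi : ℕ) + 1 from by omega),
          if_pos (show (k : ℕ) < (fi : ℕ) from hk),
          if_pos (Fin.lt_def.mpr hk), add_zero]
      · have hkfi : k = fi := Fin.ext hk
        rw [if_pos (show (k : ℕ) < (fi : ℕ) + 1 from by omega),
          if_neg (show ¬ (k : ℕ) < (fi : ℕ) from by omega),
          if_neg (show ¬ k < fi from by rw [Fin.lt_def]; omega),
          if_pos hkfi, hkfi, hξ, ha]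
        decide
      · rw [if_neg (show ¬ (k : ℕ) < (fi : ℕ) + 1 from by omega),
          if_neg (show ¬ (k : ℕ) < (fi : ℕ) from by omega),
          if_pos (Fin.lt_def.mpr hk),
          if_neg (show ¬ k < fi from by rw [Fin.lt_def]; omega),
          if_neg (show k ≠ fi from Fin.ne_of_val_ne (by omega))]
    have hYj' : px s (cut m (fi : ℕ) (fj : ℕ)) fj
        = px (algStep fi fj s) (cut m (fi : ℕ) ((fj : ℕ) + 1)) fj + basisVec s fi := by
      rw [hYj, add_assoc, fun_add_self, add_zero]
    refine ⟨?_, ?_, ?_, ?_⟩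
    · intro p hp k
      rw [hsb]; exact hbp p hp k
    · intro p hp hav k
      rw [hsa] at hav
      rw [hsb]; exact hbi p hp hav k
    · intro j' hj'
      rw [hsu] at hj'
      by_cases hjj : j' = fj
      · subst hjj
        rw [hu] at hj'
        exact absurd hj' (by decide)
      · rw [hsx]
        refine ⟨fun k hk => ?_, fun hle k hki => ?_⟩
        · rw [Function.update_of_ne hjj]; exact (hused j' hj').1 k hk
        · rw [Function.update_of_ne hjj]; exact (hused j' hj').2 (by omega) k hki
    · rw [← hspan]
      apply Submodule.span_eq_span
      · apply Set.union_subset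
        · rw [hB]
          exact subset_trans Set.subset_union_left Submodule.subset_span
        · rw [Set.range_subset_iff]
          intro j'
          by_cases hjj : j' = fj
          · subst hjj
            rw [hYj]
            exact Submodule.add_mem _
              (Submodule.subset_span (Set.mem_union_right _ ⟨j', rfl⟩))
              (Submodule.subset_span (Set.mem_union_left _ ⟨fi, rfl⟩))
          · rw [hYne j' hjj]
            exact Submodule.subset_span (Set.mem_union_right _ ⟨j', rfl⟩)
      · apply Set.union_subset
        · rw [← hB]
          exact subset_trans Set.subset_union_left Submodule.subset_span
        · rw [Set.range_subset_iff]
          intro j'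
          by_cases hjj : j' = fj
          · subst hjj
            rw [hYj', ← hB]
            exact Submodule.add_mem _
              (Submodule.subset_span (Set.mem_union_right _ ⟨j', rfl⟩))
              (Submodule.subset_span (Set.mem_union_left _ ⟨fi, rfl⟩))
          · rw [← hYne j' hjj]
            exact Submodule.subset_span (Set.mem_union_right _ ⟨j', rfl⟩)
  · -- Case 4 : pivot creation
    have hb0 : ∀ k, s.b fi k = 0 := hbi fi rfl ha
    have hsu : (algStep fi fj s).used = Function.update s.used fj 1 := by
      rw [algStep_used, hu, hξ, ha]
      refine congrArg _ ?_
      decide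
    have hsa : (algStep fi fj s).av = Function.update s.av fi 0 := by
      rw [algStep_av, hu, hξ, ha]
      refine congrArg _ ?_
      decide
    have hsb : (algStep fi fj s).b = Function.update s.b fi
        (fun k => if fi < k then s.x fj k else 0) := by
      rw [algStep_b]
      refine congrArg _ ?_
      funext k
      rw [hb0 k, hu, hξ, ha]
      simp
    have hsx : (algStep fi fj s).x = Function.update s.x fj
        (fun k => if fi < k then 0 else s.x fj k) := by
      rw [algStep_x]
      refine congrArg _ ?_
      funext k
      rw [hu, hξ, ha]
      by_cases hk : fi < k <;> simp [hk, hb0, zmod2_add_self]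
    have hBne : ∀ p, p ≠ fi → basisVec (algStep fi fj s) p = basisVec s p := by
      intro p hp
      funext k
      unfold basisVec
      rw [hsa, hsb, Function.update_of_ne hp, Function.update_of_ne hp]
    have hBfi : basisVec s fi = 0 := by
      funext k
      unfold basisVec
      by_cases h1 : k < fi <;> by_cases h2 : k = fi <;> simp [h1, h2, ha, hb0]
    have hB'fi : basisVec (algStep fi fj s) fi = px s (cut m (fi : ℕ) (fj : ℕ)) fj := by
      funext k
      unfold basisVec px cut
      rw [hsa, hsb, Function.update_self, Function.update_self, if_neg (lt_irrefl ((fj : ℕ)))]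
      rcases lt_trichotomy (k : ℕ) (fi : ℕ) with hk | hk | hk
      · rw [if_pos (Fin.lt_def.mpr hk), if_pos hk]
      · have hkfi : k = fi := Fin.ext hk
        subst hkfi
        rw [if_neg (lt_irrefl k), if_pos rfl, if_neg (by omega), hξ]
        decide
      · rw [if_neg (show ¬ k < fi from by rw [Fin.lt_def]; omega),
          if_neg (show k ≠ fi from Fin.ne_of_val_ne (by omega)),
          if_pos (Fin.lt_def.mpr hk), if_neg (by omega)]
    have hY'fj : px (algStep fi fj s) (cut m (fi : ℕ) ((fj : ℕ) + 1)) fj = 0 := by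
      funext k
      unfold px cut
      rw [hsx, Function.update_self, if_pos (Nat.lt_succ_self _)]
      by_cases hk : (k : ℕ) < (fi : ℕ) + 1
      · rw [if_pos hk]; rfl
      · rw [if_neg hk, if_pos (Fin.lt_def.mpr (by omega))]; rfl
    have hYne : ∀ j', j' ≠ fj →
        px (algStep fi fj s) (cut m (fi : ℕ) ((fj : ℕ) + 1)) j' = px s (cut m (fi : ℕ) (fj : ℕ)) j' := by
      intro j' hjj
      funext k
      unfold px cut
      rw [hsx, Function.update_of_ne hjj]
      have hvne : (j' : ℕ) ≠ (fj : ℕ) := Fin.val_ne_of_ne hjj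
      have h12 : ((j' : ℕ) < (fj : ℕ) + 1) = ((j' : ℕ) < (fj : ℕ)) := by
        simp only [eq_iff_iff]; omega
      simp only [h12]
    refine ⟨?_, ?_, ?_, ?_⟩
    · intro p hp k
      rw [hsb, Function.update_of_ne (Fin.ne_of_val_ne (by omega))]
      exact hbp p hp k
    · intro p hp hav k
      have hpfi : p = fi := Fin.ext hp
      subst hpfi
      rw [hsa, Function.update_self] at hav
      exact absurd hav (by decide)
    · intro j' hj'
      by_cases hjj : j' = fj
      · subst hjj
        refine ⟨fun k hk => ?_, fun hle k hki => ?_⟩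
        · rw [hsx, Function.update_self, if_pos (Fin.lt_def.mpr hk)]
        · exact absurd hle (by omega)
      · rw [hsu, Function.update_of_ne hjj] at hj'
        rw [hsx]
        refine ⟨fun k hk => ?_, fun hle k hki => ?_⟩
        · rw [Function.update_of_ne hjj]; exact (hused j' hj').1 k hk
        · rw [Function.update_of_ne hjj]; exact (hused j' hj').2 (by omega) k hki
    · rw [← hspan]
      apply Submodule.span_eq_span
      · apply Set.union_subset
        · rw [Set.range_subset_iff]
          intro p
          by_cases hp : p = fi
          · subst hp
            rw [hB'fi]
            exact Submodule.subset_span (Set.mem_union_right _ ⟨fj, rfl⟩)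
          · rw [hBne p hp]
            exact Submodule.subset_span (Set.mem_union_left _ ⟨p, rfl⟩)
        · rw [Set.range_subset_iff]
          intro j'
          by_cases hjj : j' = fj
          · subst hjj
            rw [hY'fj]
            exact Submodule.zero_mem _
          · rw [hYne j' hjj]
            exact Submodule.subset_span (Set.mem_union_right _ ⟨j', rfl⟩)
      · apply Set.union_subset
        · rw [Set.range_subset_iff]
          intro p
          by_cases hp : p = fi
          · subst hp
            rw [hBfi]
            exact Submodule.zero_mem _
          · rw [← hBne p hp]
            exact Submodule.subset_span (Set.mem_union_left _ ⟨p, rfl⟩)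
        · rw [Set.range_subset_iff]
          intro j'
          by_cases hjj : j' = fj
          · subst hjj
            rw [← hB'fi]
            exact Submodule.subset_span (Set.mem_union_left _ ⟨fi, rfl⟩)
          · rw [← hYne j' hjj]
            exact Submodule.subset_span (Set.mem_union_right _ ⟨j', rfl⟩)

end Step

lemma inner_loop {n m : ℕ} (x0 : Fin m → Fin n → ZMod 2) (fi : Fin n) :
    ∀ (l : List (Fin m)) (j0 : ℕ) (s : AlgState n m), j0 ≤ m →
      l = (List.finRange m).drop j0 → AlgInv x0 (fi : ℕ) j0 s →
      AlgInv x0 (fi : ℕ) m (algRun (l.map (fun j => (fi, j))) s) := by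
  intro l
  induction l with
  | nil =>
    intro j0 s hj0 hl hinv
    have hlen : 0 = m - j0 := by
      have := congrArg List.length hl
      simpa using this
    have hj0m : j0 = m := by omega
    subst hj0m
    simpa [algRun] using hinv
  | cons a l ih =>
    intro j0 s hj0 hl hinv
    have hj0m : j0 < m := by
      have := congrArg List.length hl
      simp [List.length_drop] at this
      omega
    have hdrop : (List.finRange m).drop j0
        = (List.finRange m)[j0]'(by simpa using hj0m) :: (List.finRange m).drop (j0 + 1) :=
      List.drop_eq_getElem_cons (by simpa using hj0m)
    have hcons := hl.trans hdrop
    rw [List.cons.injEq] at hcons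
    obtain ⟨ha, hl2⟩ := hcons
    have hav : (a : ℕ) = j0 := by rw [ha]; simp [List.getElem_finRange]
    have hinv' : AlgInv x0 (fi : ℕ) (a : ℕ) s := by rw [hav]; exact hinv
    have h2 := step_inv x0 fi a s hinv'
    rw [hav] at h2
    have h3 := ih (j0 + 1) (algStep fi a s) (by omega) hl2 h2
    simpa [algRun, List.map_cons, List.foldl_cons] using h3

lemma row_transition {n m : ℕ} (x0 : Fin m → Fin n → ZMod 2) {i : ℕ} {s : AlgState n m}
    (h : AlgInv x0 i m s) : AlgInv x0 (i + 1) 0 s := by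
  obtain ⟨hbp, hbi, hused, hspan⟩ := h
  refine ⟨?_, ?_, ?_, ?_⟩
  · intro p hp k; exact hbp p (by omega) k
  · intro p hp hav k; exact hbp p (by omega) k
  · intro j' hj'
    exact ⟨fun k hk => (hused j' hj').1 k (by omega),
      fun _ k hki => (hused j' hj').1 k (by omega)⟩
  · rw [show cut m (i + 1) 0 = cut m i m from ?_]
    · exact hspan
    funext j'
    unfold cut
    rw [if_neg (by omega), if_pos j'.2]

lemma outer_loop {n m : ℕ} (x0 : Fin m → Fin n → ZMod 2) :
    ∀ (l : List (Fin n)) (i0 : ℕ) (s : AlgState n m), i0 ≤ n →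
      l = (List.finRange n).drop i0 → AlgInv x0 i0 0 s →
      AlgInv x0 n 0 (algRun (l.flatMap (fun i => (List.finRange m).map (fun j => (i, j)))) s) := by
  intro l
  induction l with
  | nil =>
    intro i0 s hi0 hl hinv
    have hlen : 0 = n - i0 := by
      have := congrArg List.length hl
      simpa using this
    have hi0n : i0 = n := by omega
    subst hi0n
    simpa [algRun] using hinv
  | cons a l ih =>
    intro i0 s hi0 hl hinv
    have hi0n : i0 < n := by
      have := congrArg List.length hl
      simp [List.length_drop] at this
      omega
    have hdrop : (List.finRange n).drop i0
        = (List.finRange n)[i0]'(by simpa using hi0n) :: (List.finRange n).drop (i0 + 1) :=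
      List.drop_eq_getElem_cons (by simpa using hi0n)
    have hcons := hl.trans hdrop
    rw [List.cons.injEq] at hcons
    obtain ⟨ha, hl2⟩ := hcons
    have hav : (a : ℕ) = i0 := by rw [ha]; simp [List.getElem_finRange]
    have hinv' : AlgInv x0 (a : ℕ) 0 s := by rw [hav]; exact hinv
    have h1 := inner_loop x0 a (List.finRange m) 0 s (Nat.zero_le m) List.drop_zero.symm hinv'
    have h2 := row_transition x0 h1
    rw [hav] at h2
    have h3 := ih (i0 + 1) _ (by omega) hl2 h2
    simpa [algRun, List.flatMap_cons, List.foldl_append] using h3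

lemma init_inv {n m : ℕ} (x0 : Fin m → Fin n → ZMod 2) : AlgInv x0 0 0 (initState x0) := by
  refine ⟨?_, ?_, ?_, ?_⟩
  · intro p hp k; rfl
  · intro p hp hav k; rfl
  · intro j' hj'
    have h01 : (0 : ZMod 2) ≠ 1 := by decide
    exact absurd hj' h01
  · have h2 : px (initState x0) (cut m 0 0) = x0 := by
      funext j k
      unfold px cut initState
      simp
    rw [h2, Set.union_comm]
    apply span_union_subzero
    rintro v ⟨p, rfl⟩
    have hz : basisVec (initState x0) p = 0 := by
      funext k
      unfold basisVec initState
      dsimp only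
      simp only [Pi.zero_apply]
      split_ifs <;> decide
    rw [hz]
    exact Set.mem_singleton _

/-- Correctness of Algorithm 1: the span of the output triangular basis `β`
equals the span of the input vectors. -/
theorem alg1_correct {n m : ℕ} (x0 : Fin m → Fin n → ZMod 2) :
    Submodule.span (ZMod 2) (Set.range (basisVec (algRun (allIters n m) (initState x0)))) =
      Submodule.span (ZMod 2) (Set.range x0) := by
  have h := outer_loop x0 (List.finRange n) 0 (initState x0) (Nat.zero_le n)
    List.drop_zero.symm (init_inv x0)
  obtain ⟨-, -, -, hspan⟩ := h
  unfold allIters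
  rw [← hspan]
  refine (span_union_subzero _ _ ?_).symm
  rintro v ⟨j, rfl⟩
  have hz : px (algRun ((List.finRange n).flatMap fun i => (List.finRange m).map fun j => (i, j))
      (initState x0)) (cut m n 0) j = 0 := by
    funext k
    simp [px, cut, k.isLt]
  rw [hz]
  exact Set.mem_singleton _
end

section
/- Invariant of the triangular basis algorithm: at the beginning of iteration (i,j) of Algorithm 1, if av_i = 1 then b_i[(i+1)..n] = 0, and if used_j = 1 then x_j[i..n] = 0. -/
def AlgInv_s10 {n m : ℕ} (S : List (Fin n × Fin m)) (s : AlgState n m) : Prop :=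
  (∀ j k, s.used j = 1 → (k, j) ∉ S → s.x j k = 0) ∧
  (∀ i k, s.av i = 1 → i < k → s.b i k = 0)

lemma two_cases (a : ZMod 2) : a = 0 ∨ a = 1 := by revert a; decide

lemma inv_step {n m : ℕ} {S : List (Fin n × Fin m)} {s : AlgState n m} {i : Fin n} {j : Fin m}
    (hinv : AlgInv_s10 S s)
    (h1 : ∀ k : Fin n, i ≤ k → (k, j) ∉ S)
    (h2 : ∀ k : Fin n, k < i → (k, j) ∈ S) :
    AlgInv_s10 (S ++ [(i, j)]) (algStep i j s) := by
  obtain ⟨hx', hb'⟩ := hinv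
  constructor
  · intro j' k hused hmem
    simp only [List.mem_append, List.mem_singleton, not_or, Prod.mk.injEq, not_and] at hmem
    obtain ⟨hmemS, hne⟩ := hmem
    rcases eq_or_ne j' j with rfl | hj
    · simp only [algStep, Function.update_self] at hused ⊢
      have hki : i < k := by
        rcases lt_trichotomy k i with h | h | h
        · exact absurd (h2 k h) hmemS
        · exact absurd h (fun h => (hne h) rfl)
        · exact h
      simp only [if_pos hki]
      rcases two_cases (s.x j' i) with hx | hx
      · rcases two_cases (s.used j') with hu | hu
        · simp [hx, hu] at hused
        · have := hx' j' k hu hmemS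
          simp [hx, this]
      · rcases two_cases (s.used j') with hu | hu
        · rcases two_cases (s.av i) with ha | ha
          · simp [hx, hu, ha] at hused
          · have hb0 : s.b i k = 0 := hb' i k ha hki
            simp [hx, hu, ha, hb0]
            ring_nf
            rw [show (2:ZMod 2) = 0 from rfl]
            ring
        · exact absurd (hx' j' i hu (h1 i le_rfl)) (by simp [hx])
    · simp only [algStep, Function.update_of_ne hj] at hused ⊢
      exact hx' j' k hused hmemS
  · intro i' k hav hik
    rcases eq_or_ne i' i with rfl | hi
    · simp only [algStep, Function.update_self] at hav ⊢
      simp only [if_pos hik]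
      rcases two_cases (s.x j i') with hx | hx
      · rcases two_cases (s.used j) with hu | hu
        · simp only [hx, hu, zero_mul, mul_zero, add_zero, zero_add, zero_mul]
          simpa using hb' i' k (by simpa [hx] using hav) hik
        · have hxk : s.x j k = 0 := hx' j k hu (h1 k hik.le)
          simp only [hx, hu, hxk, zero_mul, mul_zero, add_zero, zero_add]
          simpa using hb' i' k (by simpa [hx] using hav) hik
      · rcases two_cases (s.used j) with hu | hu
        · rcases two_cases (s.av i') with ha | ha
          · simp [hx, hu, ha] at hav
          · rw [hx, hu, ha] at hav
            norm_num at hav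
            exact absurd hav (by decide)
        · exact absurd (hx' j i' hu (h1 i' le_rfl)) (by simp [hx])
    · simp only [algStep, Function.update_of_ne hi] at hav ⊢
      exact hb' i' k hav hik

lemma run_inv {n m : ℕ} (x0 : Fin m → Fin n → ZMod 2) (L : List (Fin n × Fin m))
    (horder : L.Pairwise fun p q => ¬(q.1 ≤ p.1 ∧ q.2 ≤ p.2))
    (hdown : ∀ p ∈ L, ∀ q : Fin n × Fin m, q.1 ≤ p.1 → q.2 ≤ p.2 → q ≠ p → q ∈ L) :
    ∀ t, AlgInv_s10 (L.take t) (algRun (L.take t) (initState x0)) := by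
  have hpw := List.pairwise_iff_getElem.mp horder
  intro t
  induction t with
  | zero =>
    constructor
    · intro j k h; exact absurd h (by simp [algRun, initState])
    · intro i k h; simp [algRun, initState]
  | succ t ih =>
    by_cases ht : t < L.length
    · have htake : L.take (t + 1) = L.take t ++ [L[t]] := by
        rw [List.take_succ]
        simp [List.getElem?_eq_getElem ht]
      have hrun : algRun (L.take t ++ [L[t]]) (initState x0)
          = algStep (L[t]).1 (L[t]).2 (algRun (L.take t) (initState x0)) := by
        simp only [algRun, List.foldl_append, List.foldl_cons, List.foldl_nil]
      have hmemtake : ∀ q : Fin n × Fin m, q ∈ L.take t →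
          ∃ t', ∃ h : t' < L.length, t' < t ∧ L[t'] = q := by
        intro q hq
        obtain ⟨t', ht', hq'⟩ := List.mem_iff_getElem.mp hq
        rw [List.length_take] at ht'
        refine ⟨t', lt_of_lt_of_le (lt_min_iff.mp ht').2 le_rfl, (lt_min_iff.mp ht').1, ?_⟩
        rw [← hq', List.getElem_take]
      have h1 : ∀ k : Fin n, (L[t]).1 ≤ k → (k, (L[t]).2) ∉ L.take t := by
        intro k hk hmem
        obtain ⟨t', ht', htt, hq⟩ := hmemtake _ hmem
        have := hpw t' t ht' ht htt
        rw [hq] at this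
        exact this ⟨hk, le_rfl⟩
      have h2 : ∀ k : Fin n, k < (L[t]).1 → (k, (L[t]).2) ∈ L.take t := by
        intro k hk
        have hqL : (k, (L[t]).2) ∈ L := by
          refine hdown L[t] (List.getElem_mem ht) _ hk.le le_rfl ?_
          intro hcontra
          exact absurd (congrArg Prod.fst hcontra) (by simpa using hk.ne)
        obtain ⟨t'', ht'', hq⟩ := List.mem_iff_getElem.mp hqL
        have htt : t'' < t := by
          rcases lt_trichotomy t'' t with h | h | h
          · exact h
          · exfalso; subst h
            exact absurd (congrArg Prod.fst hq) (by simpa using hk.ne')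
          · exfalso
            have := hpw t t'' ht ht'' h
            rw [hq] at this
            exact this ⟨hk.le, le_rfl⟩
        have : (L.take t)[t'']'(by rw [List.length_take]; exact lt_min htt ht'') = (k, (L[t]).2) := by
          rw [List.getElem_take]; exact hq
        rw [← this]
        exact List.getElem_mem _
      have := inv_step (i := (L[t]).1) (j := (L[t]).2) ih h1 h2
      rw [htake, hrun]
      simpa using this
    · have : L.take (t + 1) = L.take t := by
        rw [List.take_of_length_le (by omega), List.take_of_length_le (by omega)]
      rw [this]; exact ih

/-- Invariant of Algorithm 1: at the beginning of iteration `(i, j)` of any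
order-respecting schedule (here: after executing a down-closed, order-respecting
list `L` of iterations containing every predecessor of `(i, j)` but not `(i, j)`),
if `av_i = 1` then `b_i[(i+1)..n] = 0`, and if `used_j = 1` then `x_j[i..n] = 0`. -/
theorem alg1_invariant {n m : ℕ} (x0 : Fin m → Fin n → ZMod 2)
    (i : Fin n) (j : Fin m) (L : List (Fin n × Fin m)) (hnd : L.Nodup)
    (horder : L.Pairwise fun p q => ¬(q.1 ≤ p.1 ∧ q.2 ≤ p.2))
    (hdown : ∀ p ∈ L, ∀ q : Fin n × Fin m, q.1 ≤ p.1 → q.2 ≤ p.2 → q ≠ p → q ∈ L)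
    (hnotyet : (i, j) ∉ L)
    (hpred : ∀ q : Fin n × Fin m, q.1 ≤ i → q.2 ≤ j → q ≠ (i, j) → q ∈ L) :
    (let s := algRun L (initState x0)
     ((s.av i = 1 → ∀ k, i < k → s.b i k = 0) ∧
      (s.used j = 1 → ∀ k, i ≤ k → s.x j k = 0))) := by
  have hinv := run_inv x0 L horder hdown L.length
  rw [List.take_length] at hinv
  obtain ⟨hx', hb'⟩ := hinv
  refine ⟨fun hav k hk => hb' i k hav hk, fun hused k hk => hx' j k hused ?_⟩
  intro hmem
  rcases eq_or_ne (k, j) (i, j) with he | hne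
  · exact hnotyet (he ▸ hmem)
  · exact hnotyet (hdown (k, j) hmem (i, j) hk le_rfl (Ne.symm hne))
end

section
/- Order-independence of Algorithm 1: any two execution schedules of the iterations (i,j) of Algorithm 1 that both respect the partial order (i,j) < (k,l) ⟺ (i ≤ k ∧ j ≤ l ∧ (i,j) ≠ (k,l)) produce the same final state (same x_j, used_j, av_i, b_i). In particular, iterations (i,j) with i + j constant may be executed in parallel. -/
lemma algStep_comm {n m : ℕ} {i i' : Fin n} {j j' : Fin m} (hi : i ≠ i') (hj : j ≠ j')
    (s : AlgState n m) : algStep i j (algStep i' j' s) = algStep i' j' (algStep i j s) := by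
  simp only [algStep, Function.update_of_ne hi, Function.update_of_ne hi.symm,
    Function.update_of_ne hj, Function.update_of_ne hj.symm]
  refine AlgState.mk.injEq .. ▸ ⟨?_, ?_, ?_, ?_⟩ <;>
    rw [Function.update_comm (by first | exact hj | exact hi | exact hj.symm | exact hi.symm)]

lemma move_front {α β : Type*} (f : β → α → β) (a : α) :
    ∀ (u : List α), (∀ b ∈ u, ∀ s, f (f s a) b = f (f s b) a) → ∀ (v : List α) (s : β),
      (u ++ a :: v).foldl f s = (u ++ v).foldl f (f s a) := by
  intro u
  induction u with
  | nil => simp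
  | cons c u' ih =>
    intro h v s
    simp only [List.cons_append, List.foldl_cons]
    rw [ih (fun b hb => h b (List.mem_cons_of_mem _ hb)) v (f s c), ← h c List.mem_cons_self]

lemma foldl_perm_eq {α β : Type*} (f : β → α → β) (P : α → α → Prop)
    (hc : ∀ a b, P a b → P b a → ∀ s, f (f s a) b = f (f s b) a) :
    ∀ (L1 L2 : List α), L1.Perm L2 → L1.Pairwise P → L2.Pairwise P →
      ∀ s, L1.foldl f s = L2.foldl f s := by
  intro L1
  induction L1 with
  | nil => intro L2 hp _ _ s; rw [hp.nil_eq]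
  | cons a t ih =>
    intro L2 hp hp1 hp2 s
    have ha : a ∈ L2 := hp.mem_iff.mp List.mem_cons_self
    obtain ⟨u, v, rfl⟩ := List.append_of_mem ha
    have hmove : ∀ b ∈ u, ∀ s', f (f s' a) b = f (f s' b) a := by
      intro b hb s'
      rcases eq_or_ne b a with rfl | hne
      · rfl
      · have hPba : P b a :=
          (List.pairwise_append.mp hp2).2.2 b hb a List.mem_cons_self
        have hbt : b ∈ t := by
          have : b ∈ a :: t := hp.symm.mem_iff.mp (by simp [hb])
          rcases List.mem_cons.mp this with h | h
          · exact absurd h hne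
          · exact h
        exact hc a b ((List.pairwise_cons.mp hp1).1 b hbt) hPba s'
    rw [move_front f a u hmove v s, List.foldl_cons]
    refine ih (u ++ v) ?_ (List.pairwise_cons.mp hp1).2 ?_ (f s a)
    · exact (List.perm_middle.symm.trans hp.symm).cons_inv.symm
    · exact hp2.sublist ((v.sublist_cons_self a).append_left u)

/-- Order-independence of Algorithm 1: any two schedules of all iterations `(i, j)`
that respect the partial order `(i,j) < (k,l) ⟺ i ≤ k ∧ j ≤ l ∧ (i,j) ≠ (k,l)`
produce the same final state. -/
theorem alg1_order_independent {n m : ℕ}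
    (L1 L2 : List (Fin n × Fin m))
    (h1 : L1.Perm (allIters n m)) (h2 : L2.Perm (allIters n m))
    (ho1 : L1.Pairwise fun p q => ¬(q.1 ≤ p.1 ∧ q.2 ≤ p.2 ∧ q ≠ p))
    (ho2 : L2.Pairwise fun p q => ¬(q.1 ≤ p.1 ∧ q.2 ≤ p.2 ∧ q ≠ p)) :
    ∀ s0 : AlgState n m, algRun L1 s0 = algRun L2 s0 := by
  intro s0
  refine foldl_perm_eq _ _ ?_ L1 L2 (h1.trans h2.symm) ho1 ho2 s0
  intro a b hab hba s
  rcases eq_or_ne a b with rfl | hne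
  · rfl
  have hi : b.1 ≠ a.1 := by
    intro h
    rcases le_total a.2 b.2 with h2 | h2
    · exact hba ⟨h.ge, h2, hne⟩
    · exact hab ⟨h.le, h2, hne.symm⟩
  have hj : b.2 ≠ a.2 := by
    intro h
    rcases le_total a.1 b.1 with h1' | h1'
    · exact hba ⟨h1', h.ge, hne⟩
    · exact hab ⟨h1', h.le, hne.symm⟩
  exact algStep_comm hi hj s
end
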